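/- In the strong product G ⊠ K₂ of any graph G with K₂, every vertex has a maximal neighbor; consequently, if G is connected, then mdim(G ⊠ K₂) = 2·|V(G)|. -/

import Mathlib

open SimpleGraph

variable {V : Type*}

/-- Distance from a vertex `w` to an (unordered) edge `e`:
the minimum of the distances to the two endpoints. -/
noncomputable def edgeVertexDist (G : SimpleGraph V) (w : V) (e : Sym2 V) : ℕ :=
  Sym2.lift ⟨fun a b => min (G.dist a w) (G.dist b w), fun a b => by simp [min_comm]⟩ e

/-- Distance from a vertex `w` to a mixed element (vertex or edge). -/
noncomputable def mixedDist (G : SimpleGraph V) (w : V) : V ⊕ G.edgeSet → ℕ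
  | Sum.inl v => G.dist v w
  | Sum.inr e => edgeVertexDist G w e.val

/-- `W` is a mixed resolving set: every two distinct mixed elements are
distinguished by the distance to some vertex of `W`. -/
def IsMixedResolving (G : SimpleGraph V) (W : Set V) : Prop :=
  ∀ x y : V ⊕ G.edgeSet, x ≠ y → ∃ w ∈ W, mixedDist G w x ≠ mixedDist G w y

/-- The mixed metric dimension of a finite graph. -/
noncomputable def mdim [Fintype V] (G : SimpleGraph V) : ℕ :=
  sInf {n | ∃ W : Finset V, W.card = n ∧ IsMixedResolving G ↑W}

/-- `y` is a maximal neighbor of `x`: `y` is a neighbor of `x` adjacent to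
every neighbor of `x` other than `y` itself. -/
def IsMaxNeighbor (G : SimpleGraph V) (x y : V) : Prop :=
  G.Adj x y ∧ ∀ z, G.Adj x z → z ≠ y → G.Adj y z

/-- The strong product of two simple graphs. -/
def strongProd {α β : Type*} (G : SimpleGraph α) (H : SimpleGraph β) :
    SimpleGraph (α × β) where
  Adj x y := (x.1 = y.1 ∧ H.Adj x.2 y.2) ∨ (x.2 = y.2 ∧ G.Adj x.1 y.1) ∨
    (G.Adj x.1 y.1 ∧ H.Adj x.2 y.2)
  symm := by
    constructor
    rintro ⟨a, b⟩ ⟨c, d⟩ (⟨h1, h2⟩ | ⟨h1, h2⟩ | ⟨h1, h2⟩)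
    · exact Or.inl ⟨h1.symm, h2.symm⟩
    · exact Or.inr (Or.inl ⟨h1.symm, h2.symm⟩)
    · exact Or.inr (Or.inr ⟨h1.symm, h2.symm⟩)
  loopless := by
    constructor
    rintro ⟨a, b⟩ (⟨h1, h2⟩ | ⟨h1, h2⟩ | ⟨h1, h2⟩)
    · exact H.loopless.irrefl _ h2
    · exact G.loopless.irrefl _ h2
    · exact G.loopless.irrefl _ h1

section Aux

variable {α : Type*}

lemma edgeVertexDist_mk {G : SimpleGraph α} (w a b : α) :
    edgeVertexDist G w s(a, b) = min (G.dist a w) (G.dist b w) := rfl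

lemma evd_zero_of_mem {G : SimpleGraph α} {x : α} {e : Sym2 α} (h : x ∈ e) :
    edgeVertexDist G x e = 0 := by
  induction e using Sym2.ind with
  | _ a b =>
    rw [Sym2.mem_iff] at h
    rcases h with rfl | rfl <;> simp [edgeVertexDist_mk, SimpleGraph.dist_self]

lemma evd_ne_zero_of_not_mem {G : SimpleGraph α} (hG : G.Connected) {x : α} {e : Sym2 α}
    (h : x ∉ e) : edgeVertexDist G x e ≠ 0 := by
  induction e using Sym2.ind with
  | _ a b =>
    rw [Sym2.mem_iff] at h
    push_neg at h
    have h1 := hG.pos_dist_of_ne (Ne.symm h.1)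
    have h2 := hG.pos_dist_of_ne (Ne.symm h.2)
    rw [edgeVertexDist_mk]
    omega

/-- A maximal neighbor is at least as close to every other vertex. -/
lemma maxNeighbor_dist_le {G : SimpleGraph α} (hG : G.Connected) {x y : α}
    (h : IsMaxNeighbor G x y) {w : α} (hw : w ≠ x) : G.dist y w ≤ G.dist x w := by
  obtain ⟨p, hp⟩ := hG.exists_walk_length_eq_dist x w
  cases p with
  | nil => exact absurd rfl hw
  | @cons _ z _ hxz q =>
    rw [SimpleGraph.Walk.length_cons] at hp
    by_cases hzy : z = y
    · have hq := SimpleGraph.dist_le q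
      rw [← hzy]
      omega
    · have hadj : G.Adj y z := h.2 z hxz hzy
      calc G.dist y w ≤ (SimpleGraph.Walk.cons hadj q).length :=
            SimpleGraph.dist_le _
        _ = G.dist x w := by rw [SimpleGraph.Walk.length_cons]; omega

/-- The full vertex set is mixed resolving in a connected graph. -/
lemma univ_isMixedResolving [Fintype α] {G : SimpleGraph α} (hG : G.Connected) :
    IsMixedResolving G ↑(Finset.univ : Finset α) := by
  have key : ∀ (v : α) (e : G.edgeSet), ∃ w, G.dist v w ≠ edgeVertexDist G w e.val := by
    rintro v ⟨e, he⟩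
    induction e using Sym2.ind with
    | _ a b =>
      have hab : a ≠ b := (G.mem_edgeSet.mp he).ne
      by_cases hva : v = a
      · subst hva
        refine ⟨b, ?_⟩
        rw [edgeVertexDist_mk]
        have := hG.pos_dist_of_ne hab
        simp only [SimpleGraph.dist_self, min_zero]
        omega
      · refine ⟨a, ?_⟩
        rw [edgeVertexDist_mk]
        have := hG.pos_dist_of_ne hva
        simp only [SimpleGraph.dist_self, zero_min]
        omega
  rintro (u | e) (v | f) hxy
  · refine ⟨u, by simp, ?_⟩
    have huv : u ≠ v := by simpa using hxy.symm ∘ congrArg Sum.inl ∘ Eq.symm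
    simp only [mixedDist, SimpleGraph.dist_self]
    exact fun hc => (hG.pos_dist_of_ne (Ne.symm huv)).ne' (by omega)
  · obtain ⟨w, hw⟩ := key u f
    exact ⟨w, by simp, hw⟩
  · obtain ⟨w, hw⟩ := key v e
    exact ⟨w, by simp, fun hc => hw hc.symm⟩
  · have hef : e.val ≠ f.val := fun hc => hxy (congrArg Sum.inr (Subtype.ext hc))
    have : ¬ ∀ x, x ∈ e.val ↔ x ∈ f.val := fun hc => hef (Sym2.ext hc)
    push_neg at this
    obtain ⟨x, hx⟩ := this
    refine ⟨x, by simp, ?_⟩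
    simp only [mixedDist]
    rcases hx with ⟨hxe, hxf⟩ | ⟨hxe, hxf⟩
    · rw [evd_zero_of_mem hxe]
      exact (evd_ne_zero_of_not_mem hG hxf).symm
    · rw [evd_zero_of_mem hxf]
      exact evd_ne_zero_of_not_mem hG hxe

/-- If every vertex has a maximal neighbor, any mixed resolving set contains all vertices. -/
lemma mem_of_isMixedResolving {G : SimpleGraph α} (hG : G.Connected)
    (hmax : ∀ x : α, ∃ y, IsMaxNeighbor G x y) {W : Finset α}
    (hW : IsMixedResolving G ↑W) (x : α) : x ∈ W := by
  by_contra hx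
  obtain ⟨y, hy⟩ := hmax x
  obtain ⟨w, hwW, hwd⟩ := hW (Sum.inl y) (Sum.inr ⟨s(x, y), G.mem_edgeSet.mpr hy.1⟩)
    (by simp)
  apply hwd
  have hwx : w ≠ x := fun hc => hx (hc ▸ hwW)
  have hle := maxNeighbor_dist_le hG hy hwx
  simp only [mixedDist, edgeVertexDist_mk]
  omega

end Aux

lemma strongProd_maxNeighbor (G : SimpleGraph V) (x : V × Fin 2) :
    IsMaxNeighbor (strongProd G (⊤ : SimpleGraph (Fin 2))) x (x.1, x.2 + 1) := by
  have hne : ∀ i : Fin 2, i ≠ i + 1 := by decide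
  have hforce : ∀ i j : Fin 2, j ≠ i → j = i + 1 := by decide
  obtain ⟨v, i⟩ := x
  constructor
  · exact Or.inl ⟨rfl, by simp⟩
  · rintro ⟨w, j⟩ hadj hzy
    rcases hadj with ⟨h1, h2⟩ | ⟨h1, h2⟩ | ⟨h1, h2⟩
    · refine absurd ?_ hzy
      have hj : j = i + 1 := hforce i j (Ne.symm ((SimpleGraph.top_adj _ _).mp h2))
      have h1' : v = w := h1
      subst hj
      subst h1'
      rfl
    · simp only at h1
      subst h1
      exact Or.inr (Or.inr ⟨h2, (SimpleGraph.top_adj _ _).mpr (Ne.symm (hne i))⟩)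
    · have hj : j = i + 1 := hforce i j (Ne.symm ((SimpleGraph.top_adj _ _).mp h2))
      subst hj
      exact Or.inr (Or.inl ⟨rfl, h1⟩)

lemma strongProd_connected (G : SimpleGraph V) (hG : G.Connected) :
    (strongProd G (⊤ : SimpleGraph (Fin 2))).Connected := by
  have hne : Nonempty V := hG.nonempty
  have hne2 : Nonempty (V × Fin 2) := ⟨(hne.some, 0)⟩
  rw [SimpleGraph.connected_iff]
  refine ⟨fun x y => ?_, hne2⟩
  obtain ⟨u, i⟩ := x
  obtain ⟨v, j⟩ := y
  have h1 : (strongProd G (⊤ : SimpleGraph (Fin 2))).Reachable (u, i) (v, i) :=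
    (hG.preconnected u v).elim fun p =>
      ⟨(p.map ⟨fun v => (v, i), fun h => Or.inr (Or.inl ⟨rfl, h⟩)⟩).copy rfl rfl⟩
  refine h1.trans ?_
  rcases eq_or_ne i j with rfl | hij
  · exact SimpleGraph.Reachable.refl _
  · exact SimpleGraph.Adj.reachable (Or.inl ⟨rfl, by simpa using hij⟩)

/-- In `G ⊠ K₂` every vertex has a maximal neighbor; consequently, if `G` is
connected, then `mdim (G ⊠ K₂) = 2 * |V(G)|`. -/
theorem stmt_5 [Fintype V] (G : SimpleGraph V) :
    (∀ x : V × Fin 2, ∃ y : V × Fin 2,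
        IsMaxNeighbor (strongProd G (⊤ : SimpleGraph (Fin 2))) x y) ∧
    (G.Connected →
      mdim (strongProd G (⊤ : SimpleGraph (Fin 2))) = 2 * Fintype.card V) := by
  have hmax : ∀ x : V × Fin 2, ∃ y,
      IsMaxNeighbor (strongProd G (⊤ : SimpleGraph (Fin 2))) x y :=
    fun x => ⟨_, strongProd_maxNeighbor G x⟩
  refine ⟨hmax, fun hG => ?_⟩
  have hP := strongProd_connected G hG
  have hcard : (Finset.univ : Finset (V × Fin 2)).card = 2 * Fintype.card V := by
    simp [Fintype.card_prod, mul_comm]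
  have hmem : 2 * Fintype.card V ∈
      {n | ∃ W : Finset (V × Fin 2), W.card = n ∧
        IsMixedResolving (strongProd G (⊤ : SimpleGraph (Fin 2))) ↑W} :=
    ⟨Finset.univ, hcard, univ_isMixedResolving hP⟩
  refine le_antisymm (Nat.sInf_le hmem) (le_csInf ⟨_, hmem⟩ ?_)
  rintro n ⟨W, hWc, hWr⟩
  have : W = Finset.univ :=
    Finset.eq_univ_iff_forall.mpr (mem_of_isMixedResolving hP hmax hWr)
  rw [← hWc, this, hcard]
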